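/- There exists an absolute constant C > 0 such that the following holds. Let A > 0 and let U : [−1,1] → ℝ be continuous on [−1,1] and twice continuously differentiable on (−1,1), satisfying |U(y)| ≤ A(1−y²)(1 + |ln(1−y²)|), |U'(y)| ≤ A(1 + |ln(1−y²)|), and |U''(y)| ≤ A/(1−y²) for all y ∈ (−1,1). Then the associated axisymmetric no-swirl velocity field u is differentiable on ℝ³∖{x'=0} and its Jacobian satisfies |∇u(x)| ≤ C A / (|x| |x'|) for all x with x' ≠ 0. -/

import Mathlib

set_option maxHeartbeats 1000000

open Set

/-- The Euclidean norm of `x' = (x₁, x₂)`, the first two coordinates of `x ∈ ℝ³`. -/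
noncomputable def primeNorm3 (x : EuclideanSpace ℝ (Fin 3)) : ℝ :=
  Real.sqrt (x 0 ^ 2 + x 1 ^ 2)

/-- The axisymmetric no-swirl velocity field associated with the profile `U`. -/
noncomputable def velField (U : ℝ → ℝ) (x : EuclideanSpace ℝ (Fin 3)) :
    EuclideanSpace ℝ (Fin 3) :=
  WithLp.toLp 2 fun i =>
    if i = 0 then
      x 0 * deriv U (x 2 / ‖x‖) / ‖x‖ ^ 2 + x 0 * x 2 * U (x 2 / ‖x‖) / (‖x‖ * primeNorm3 x ^ 2)
    else if i = 1 then
      x 1 * deriv U (x 2 / ‖x‖) / ‖x‖ ^ 2 + x 1 * x 2 * U (x 2 / ‖x‖) / (‖x‖ * primeNorm3 x ^ 2)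
    else
      x 2 * deriv U (x 2 / ‖x‖) / ‖x‖ ^ 2 - U (x 2 / ‖x‖) / ‖x‖

/-- The Hilbert–Schmidt (Frobenius) norm of the Jacobian of `v` at `x`. -/
noncomputable def hsNorm (v : EuclideanSpace ℝ (Fin 3) → EuclideanSpace ℝ (Fin 3))
    (x : EuclideanSpace ℝ (Fin 3)) : ℝ :=
  Real.sqrt (∑ i : Fin 3, ∑ j : Fin 3, (fderiv ℝ v x (EuclideanSpace.single j 1) i) ^ 2)

abbrev E3 := EuclideanSpace ℝ (Fin 3)


/-- A scalar function with a derivative at `x`, a value bound, and a bound on the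
derivative along all coordinate directions. -/
def Good (x : E3) (f : E3 → ℝ) (b db : ℝ) : Prop :=
  ∃ D : E3 →L[ℝ] ℝ, HasFDerivAt f D x ∧ |f x| ≤ b ∧
    ∀ j : Fin 3, |D (EuclideanSpace.single j 1)| ≤ db

lemma Good.mono {x : E3} {f b db b' db'} (h : Good x f b db) (hb : b ≤ b') (hdb : db ≤ db') :
    Good x f b' db' := by
  obtain ⟨D, hD, h1, h2⟩ := h
  exact ⟨D, hD, h1.trans hb, fun j => (h2 j).trans hdb⟩

lemma Good.add {x : E3} {f g bf dbf bg dbg} (hf : Good x f bf dbf) (hg : Good x g bg dbg) :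
    Good x (fun z => f z + g z) (bf + bg) (dbf + dbg) := by
  obtain ⟨Df, hDf, hf1, hf2⟩ := hf
  obtain ⟨Dg, hDg, hg1, hg2⟩ := hg
  refine ⟨Df + Dg, hDf.add hDg, ?_, fun j => ?_⟩
  · exact (abs_add_le _ _).trans (add_le_add hf1 hg1)
  · simp only [ContinuousLinearMap.add_apply]
    exact (abs_add_le _ _).trans (add_le_add (hf2 j) (hg2 j))

lemma Good.sub {x : E3} {f g bf dbf bg dbg} (hf : Good x f bf dbf) (hg : Good x g bg dbg) :
    Good x (fun z => f z - g z) (bf + bg) (dbf + dbg) := by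
  obtain ⟨Df, hDf, hf1, hf2⟩ := hf
  obtain ⟨Dg, hDg, hg1, hg2⟩ := hg
  refine ⟨Df - Dg, hDf.sub hDg, ?_, fun j => ?_⟩
  · exact (abs_sub _ _).trans (add_le_add hf1 hg1)
  · simp only [ContinuousLinearMap.sub_apply]
    exact (abs_sub _ _).trans (add_le_add (hf2 j) (hg2 j))

lemma Good.mul {x : E3} {f g bf dbf bg dbg} (hf : Good x f bf dbf) (hg : Good x g bg dbg) :
    Good x (fun z => f z * g z) (bf * bg) (bf * dbg + bg * dbf) := by
  obtain ⟨Df, hDf, hf1, hf2⟩ := hf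
  obtain ⟨Dg, hDg, hg1, hg2⟩ := hg
  refine ⟨f x • Dg + g x • Df, hDf.mul hDg, ?_, fun j => ?_⟩
  · rw [abs_mul]
    exact mul_le_mul hf1 hg1 (abs_nonneg _) ((abs_nonneg _).trans hf1)
  · simp only [ContinuousLinearMap.add_apply, ContinuousLinearMap.smul_apply, smul_eq_mul]
    refine (abs_add_le _ _).trans (add_le_add ?_ ?_)
    · rw [abs_mul]
      exact mul_le_mul hf1 (hg2 j) (abs_nonneg _) ((abs_nonneg _).trans hf1)
    · rw [abs_mul]
      exact mul_le_mul hg1 (hf2 j) (abs_nonneg _) ((abs_nonneg _).trans hg1)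

lemma Good.comp {x : E3} {f b db} (h : Good x f b db) {h₂ : ℝ → ℝ} {d c dc : ℝ}
    (hd : HasDerivAt h₂ d (f x)) (hc : |h₂ (f x)| ≤ c) (hdc : |d| ≤ dc) :
    Good x (fun z => h₂ (f z)) c (dc * db) := by
  obtain ⟨D, hD, _, h2⟩ := h
  refine ⟨d • D, hd.comp_hasFDerivAt x hD, hc, fun j => ?_⟩
  simp only [ContinuousLinearMap.smul_apply, smul_eq_mul]
  rw [abs_mul]
  exact mul_le_mul hdc (h2 j) (abs_nonneg _) ((abs_nonneg _).trans hdc)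

lemma Good.inv {x : E3} {f b db m} (h : Good x f b db) (hm : 0 < m) (hfm : m ≤ |f x|)
    (hdb : 0 ≤ db) :
    Good x (fun z => (f z)⁻¹) m⁻¹ (db / m ^ 2) := by
  have hfx : f x ≠ 0 := by
    intro h0; rw [h0, abs_zero] at hfm; exact absurd hfm (not_le.2 hm)
  have := h.comp (hasDerivAt_inv hfx) (c := m⁻¹) (dc := (m ^ 2)⁻¹) ?_ ?_
  · refine this.mono le_rfl ?_
    rw [div_eq_inv_mul]
  · rw [abs_inv]
    exact inv_anti₀ hm hfm
  · rw [abs_neg, abs_inv, abs_pow]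
    refine inv_anti₀ (by positivity) ?_
    exact pow_le_pow_left₀ hm.le hfm 2


noncomputable def Nf (z : E3) : ℝ := Real.sqrt (z 0 ^ 2 + z 1 ^ 2 + z 2 ^ 2)

noncomputable def DS (x : E3) : E3 →L[ℝ] ℝ :=
  (2 * x 0) • EuclideanSpace.proj 0 + (2 * x 1) • EuclideanSpace.proj 1 +
    (2 * x 2) • EuclideanSpace.proj 2

lemma hasFDerivAt_coord (x : E3) (j : Fin 3) :
    HasFDerivAt (fun z : E3 => z j) (EuclideanSpace.proj (𝕜 := ℝ) j) x :=
  ((EuclideanSpace.proj (𝕜 := ℝ) j).hasFDerivAt (x := x)).congr_of_eventuallyEq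
    (Filter.Eventually.of_forall fun z => by simp [PiLp.proj_apply])

lemma hasFDerivAt_sq_coord (x : E3) (j : Fin 3) :
    HasFDerivAt (fun z : E3 => z j ^ 2) ((2 * x j) • EuclideanSpace.proj (𝕜 := ℝ) j) x := by
  have h := (hasFDerivAt_coord x j).mul (hasFDerivAt_coord x j)
  have heq : (fun z : E3 => z j ^ 2) = fun z => z j * z j := by funext z; ring
  rw [heq]
  refine h.congr_fderiv ?_
  ext w
  simp only [ContinuousLinearMap.smul_apply, ContinuousLinearMap.add_apply, smul_eq_mul]
  ring

lemma hasFDerivAt_S (x : E3) :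
    HasFDerivAt (fun z : E3 => z 0 ^ 2 + z 1 ^ 2 + z 2 ^ 2) (DS x) x :=
  ((hasFDerivAt_sq_coord x 0).add (hasFDerivAt_sq_coord x 1)).add (hasFDerivAt_sq_coord x 2)

lemma DS_apply (x : E3) (j : Fin 3) : DS x (EuclideanSpace.single j 1) = 2 * x j := by
  fin_cases j <;>
    simp [DS, EuclideanSpace.single_apply, PiLp.proj_apply] <;> ring

lemma hasFDerivAt_Nf (x : E3) (hx : x 0 ^ 2 + x 1 ^ 2 + x 2 ^ 2 ≠ 0) :
    HasFDerivAt Nf ((1 / (2 * Nf x)) • DS x) x := by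
  have h := (Real.hasDerivAt_sqrt hx).comp_hasFDerivAt x (hasFDerivAt_S x)
  exact h


lemma hb01_lemma {r ρ A : ℝ} (hrpos : 0 < r) (hρpos : 0 < ρ) (hρr : ρ ≤ r) (hA : 0 < A) :
    (((ρ * (3 * A * r / ρ)) * ((r * 1 + r * 1) / (r * r) ^ 2)
          + (r * r)⁻¹ * (ρ * (2 * A * r / ρ ^ 2) + (3 * A * r / ρ) * 1))
        + ((ρ * (3 * A * ρ)) * ((r * ((ρ * 1 + ρ * 1) + (ρ * 1 + ρ * 1)) + (ρ * ρ + ρ * ρ) * 1)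
              / (r * ρ ^ 2) ^ 2)
          + (r * ρ ^ 2)⁻¹ * (ρ * (6 * A) + (3 * A * ρ) * 1)))
      ≤ 50 * A / (r * ρ) := by
  have heq : (((ρ * (3 * A * r / ρ)) * ((r * 1 + r * 1) / (r * r) ^ 2)
          + (r * r)⁻¹ * (ρ * (2 * A * r / ρ ^ 2) + (3 * A * r / ρ) * 1))
        + ((ρ * (3 * A * ρ)) * ((r * ((ρ * 1 + ρ * 1) + (ρ * 1 + ρ * 1)) + (ρ * ρ + ρ * ρ) * 1)
              / (r * ρ ^ 2) ^ 2)
          + (r * ρ ^ 2)⁻¹ * (ρ * (6 * A) + (3 * A * ρ) * 1)))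
        = 12 * A / r ^ 2 + 26 * A / (r * ρ) := by
    field_simp
    ring
  rw [heq]
  have h1 : 12 * A / r ^ 2 ≤ 12 * A / (r * ρ) := by
    apply div_le_div_of_nonneg_left (by positivity) (by positivity)
    nlinarith
  have h2 : 26 * A / (r * ρ) ≤ 38 * A / (r * ρ) := by
    rw [div_le_div_iff₀ (by positivity) (by positivity)]
    nlinarith [mul_pos hrpos hρpos, mul_pos (mul_pos hrpos hρpos) (mul_pos hrpos hρpos)]
  have h3 : 12 * A / (r * ρ) + 38 * A / (r * ρ) = 50 * A / (r * ρ) := by ring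
  linarith

lemma hb2_lemma {r ρ A : ℝ} (hrpos : 0 < r) (hρpos : 0 < ρ) (hρr : ρ ≤ r) (hA : 0 < A) :
    (((3 * A * r ^ 2 / ρ) * ((r * 1 + r * 1) / (r * r) ^ 2)
          + (r * r)⁻¹ * (4 * A * r / ρ))
        + ((3 * A * ρ / r) * (1 / r ^ 2) + r⁻¹ * (6 * A / ρ)))
      ≤ 50 * A / (r * ρ) := by
  have heq : (((3 * A * r ^ 2 / ρ) * ((r * 1 + r * 1) / (r * r) ^ 2)
          + (r * r)⁻¹ * (4 * A * r / ρ))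
        + ((3 * A * ρ / r) * (1 / r ^ 2) + r⁻¹ * (6 * A / ρ)))
        = 16 * A / (r * ρ) + 3 * A * ρ / r ^ 3 := by
    field_simp
    ring
  rw [heq]
  have hsq : ρ * ρ ≤ r * r := mul_le_mul hρr hρr hρpos.le hrpos.le
  have h1 : 3 * A * ρ / r ^ 3 ≤ 3 * A / (r * ρ) := by
    rw [div_le_div_iff₀ (by positivity) (by positivity)]
    nlinarith [mul_le_mul_of_nonneg_left hsq (by positivity : (0:ℝ) ≤ 3 * A * r)]
  have h2 : 16 * A / (r * ρ) + 3 * A / (r * ρ) ≤ 50 * A / (r * ρ) := by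
    rw [← add_div, div_le_div_iff₀ (by positivity) (by positivity)]
    nlinarith [mul_pos hrpos hρpos, mul_pos (mul_pos hrpos hρpos) (mul_pos hrpos hρpos)]
  linarith

noncomputable def Yf (z : E3) : ℝ := z 2 / Nf z

noncomputable def u0f (U : ℝ → ℝ) (z : E3) : ℝ :=
  z 0 * deriv U (Yf z) * (Nf z * Nf z)⁻¹
    + z 0 * (z 2 * U (Yf z)) * (Nf z * (z 0 * z 0 + z 1 * z 1))⁻¹

noncomputable def u1f (U : ℝ → ℝ) (z : E3) : ℝ :=
  z 1 * deriv U (Yf z) * (Nf z * Nf z)⁻¹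
    + z 1 * (z 2 * U (Yf z)) * (Nf z * (z 0 * z 0 + z 1 * z 1))⁻¹

noncomputable def u2f (U : ℝ → ℝ) (z : E3) : ℝ :=
  z 2 * deriv U (Yf z) * (Nf z * Nf z)⁻¹ - U (Yf z) * (Nf z)⁻¹

lemma primeNorm3_sq (z : E3) : primeNorm3 z ^ 2 = z 0 * z 0 + z 1 * z 1 := by
  rw [primeNorm3, Real.sq_sqrt (by positivity)]
  ring

lemma norm_eq_Nf (z : E3) : ‖z‖ = Nf z := by
  rw [EuclideanSpace.norm_eq, Nf]
  congr 1
  simp [Fin.sum_univ_three, Real.norm_eq_abs, sq_abs]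

lemma velField_apply0 (U : ℝ → ℝ) (z : E3) : velField U z 0 = u0f U z := by
  have h : velField U z 0 = z 0 * deriv U (z 2 / ‖z‖) / ‖z‖ ^ 2
      + z 0 * z 2 * U (z 2 / ‖z‖) / (‖z‖ * primeNorm3 z ^ 2) := by
    simp [velField]
  rw [h, norm_eq_Nf, primeNorm3_sq, u0f, Yf]
  ring

lemma velField_apply1 (U : ℝ → ℝ) (z : E3) : velField U z 1 = u1f U z := by
  have h : velField U z 1 = z 1 * deriv U (z 2 / ‖z‖) / ‖z‖ ^ 2
      + z 1 * z 2 * U (z 2 / ‖z‖) / (‖z‖ * primeNorm3 z ^ 2) := by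
    simp [velField]
  rw [h, norm_eq_Nf, primeNorm3_sq, u1f, Yf]
  ring

lemma velField_apply2 (U : ℝ → ℝ) (z : E3) : velField U z 2 = u2f U z := by
  have h : velField U z 2 = z 2 * deriv U (z 2 / ‖z‖) / ‖z‖ ^ 2 - U (z 2 / ‖z‖) / ‖z‖ := by
    simp [velField]
  rw [h, norm_eq_Nf, u2f, Yf]
  ring


lemma main_estimate (x : E3) (hQpos : 0 < x 0 ^ 2 + x 1 ^ 2) (r ρ A y : ℝ) (U : ℝ → ℝ)
    (hA : 0 < A) (hydef : y = x 2 / r)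
    (hy1 : |y| ≤ 1)
    (hdU : HasDerivAt U (deriv U y) y)
    (hddU : HasDerivAt (deriv U) (deriv (deriv U) y) y)
    (hWb : |U y| ≤ 3 * A * ρ / r)
    (hVb : |deriv U y| ≤ 3 * A * r / ρ)
    (hU2b : |deriv (deriv U) y| ≤ A * r ^ 2 / ρ ^ 2)
    (hrx : r = Real.sqrt (x 0 ^ 2 + x 1 ^ 2 + x 2 ^ 2))
    (hρdef : ρ = Real.sqrt (x 0 ^ 2 + x 1 ^ 2))
    (hρpos : 0 < ρ) (hrpos : 0 < r) (hρr : ρ ≤ r)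
    (hρsq : ρ ^ 2 = x 0 ^ 2 + x 1 ^ 2) (hr2 : r ^ 2 = ρ ^ 2 + x 2 ^ 2)
    (habs0 : |x 0| ≤ ρ) (habs1 : |x 1| ≤ ρ) (habs2 : |x 2| ≤ r) :
    DifferentiableAt ℝ (velField U) x ∧ hsNorm (velField U) x ≤ 150 * A / (r * ρ) := by
  have hNx : Nf x = r := by rw [Nf, hrx]
  have hSx : x 0 ^ 2 + x 1 ^ 2 + x 2 ^ 2 ≠ 0 := by nlinarith [sq_nonneg (x 2)]
  have hN : HasFDerivAt Nf ((1 / (2 * r)) • DS x) x := by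
    have := hasFDerivAt_Nf x hSx
    rwa [hNx] at this
  -- inverse of N
  have hNinv : HasFDerivAt (fun z => (Nf z)⁻¹) ((-(r ^ 2)⁻¹ * (1 / (2 * r))) • DS x) x := by
    have h := (hasDerivAt_inv (by rw [hNx]; exact hrpos.ne')).comp_hasFDerivAt x hN
    refine h.congr_fderiv ?_
    rw [hNx]
    rw [smul_smul]
  -- Y = z 2 * (N z)⁻¹
  set DY : E3 →L[ℝ] ℝ :=
    x 2 • ((-(r ^ 2)⁻¹ * (1 / (2 * r))) • DS x) + r⁻¹ • EuclideanSpace.proj 2 with hDYdef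
  have hY : HasFDerivAt Yf DY x := by
    have h := (hasFDerivAt_coord x 2).mul hNinv
    have heq : Yf = fun z => z 2 * (Nf z)⁻¹ := by
      funext z; rw [Yf, div_eq_mul_inv]
    rw [heq]
    refine h.congr_fderiv ?_
    rw [hNx]
  have hDYval : ∀ j : Fin 3, DY (EuclideanSpace.single j 1)
      = (if j = 2 then r⁻¹ else 0) - x 2 * x j / r ^ 3 := by
    intro j
    rw [hDYdef]
    simp only [ContinuousLinearMap.add_apply, ContinuousLinearMap.smul_apply, smul_eq_mul,
      DS_apply, PiLp.proj_apply, EuclideanSpace.single_apply]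
    have : (1:Fin 3) + 1 = 2 := rfl
    fin_cases j <;> simp <;> field_simp <;> ring
  have hDYb : ∀ j : Fin 3, |DY (EuclideanSpace.single j 1)| ≤ 2 / r := by
    intro j
    rw [hDYval j]
    refine (abs_sub _ _).trans ?_
    have h1 : |(if j = 2 then r⁻¹ else 0 : ℝ)| ≤ 1 / r := by
      split
      · rw [abs_of_pos (inv_pos.2 hrpos), one_div]
      · rw [abs_zero]; positivity
    have h2 : |x 2 * x j / r ^ 3| ≤ 1 / r := by
      have hj : |x j| ≤ r := by
        fin_cases j
        · exact habs0.trans hρr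
        · exact habs1.trans hρr
        · exact habs2
      have hr3 : |r ^ 3| = r ^ 3 := abs_of_pos (by positivity)
      rw [abs_div, hr3, abs_mul, div_le_div_iff₀ (by positivity) hrpos]
      nlinarith [mul_le_mul habs2 hj (abs_nonneg _) hrpos.le, abs_nonneg (x 2), abs_nonneg (x j)]
    have hsum : (1:ℝ)/r + 1/r = 2/r := by ring
    linarith
  have hDYb2 : ∀ j : Fin 3, |x 2 * DY (EuclideanSpace.single j 1)| ≤ ρ / r := by
    intro j
    rw [hDYval j]
    have hx2sq : x 2 ^ 2 ≤ r ^ 2 := by nlinarith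
    by_cases hj : j = 2
    · subst hj
      have key : x 2 * ((if (2:Fin 3) = 2 then r⁻¹ else 0) - x 2 * x 2 / r ^ 3)
          = x 2 * ρ ^ 2 / r ^ 3 := by
        rw [if_pos rfl]
        have h : ρ ^ 2 = r ^ 2 - x 2 ^ 2 := by linarith
        rw [h]
        field_simp
      have h3 : |r ^ 3| = r ^ 3 := abs_of_pos (by positivity)
      have h4 : |ρ ^ 2| = ρ ^ 2 := abs_of_nonneg (sq_nonneg ρ)
      rw [key, abs_div, h3, abs_mul, h4, div_le_div_iff₀ (by positivity) hrpos]
      nlinarith [mul_le_mul_of_nonneg_right habs2 (mul_nonneg (sq_nonneg ρ) hrpos.le),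
        mul_le_mul_of_nonneg_right hρr (by positivity : (0:ℝ) ≤ ρ * r ^ 2)]
    · have hxj : |x j| ≤ ρ := by
        fin_cases j
        · exact habs0
        · exact habs1
        · simp at hj
      have key : x 2 * ((if j = 2 then r⁻¹ else 0) - x 2 * x j / r ^ 3)
          = -(x 2 ^ 2 * x j / r ^ 3) := by
        rw [if_neg hj]; ring
      have h3 : |r ^ 3| = r ^ 3 := abs_of_pos (by positivity)
      have h4 : |x 2 ^ 2| = x 2 ^ 2 := abs_of_nonneg (sq_nonneg (x 2))
      rw [key, abs_neg, abs_div, h3, abs_mul, h4, div_le_div_iff₀ (by positivity) hrpos]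
      have h1 : x 2 ^ 2 * |x j| ≤ r ^ 2 * ρ :=
        mul_le_mul hx2sq hxj (abs_nonneg _) (by positivity)
      nlinarith [mul_nonneg (sub_nonneg.2 h1) hrpos.le]
  -- value of Y at x
  have hYx : Yf x = y := by rw [Yf, hNx, hydef]
  have hdU' : HasDerivAt U (deriv U y) (Yf x) := by rw [hYx]; exact hdU
  have hddU' : HasDerivAt (deriv U) (deriv (deriv U) y) (Yf x) := by rw [hYx]; exact hddU
  have gY : Good x Yf 1 (2 / r) := ⟨DY, hY, by rw [hYx]; exact hy1, hDYb⟩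
  have gW : Good x (fun z => U (Yf z)) (3 * A * ρ / r) (6 * A / ρ) := by
    have h := gY.comp (c := 3 * A * ρ / r) (dc := 3 * A * r / ρ) hdU' (by rw [hYx]; exact hWb) hVb
    refine h.mono le_rfl (le_of_eq ?_)
    field_simp
    ring
  have gV : Good x (fun z => deriv U (Yf z)) (3 * A * r / ρ) (2 * A * r / ρ ^ 2) := by
    have h := gY.comp (c := 3 * A * r / ρ) (dc := A * r ^ 2 / ρ ^ 2) hddU' (by rw [hYx]; exact hVb) hU2b
    refine h.mono le_rfl (le_of_eq ?_)
    field_simp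
  -- refined products with x 2
  have hWfd : HasFDerivAt (fun z => U (Yf z)) (deriv U y • DY) x := by
    have := hdU'.comp_hasFDerivAt x hY
    exact this
  have hVfd : HasFDerivAt (fun z => deriv U (Yf z)) (deriv (deriv U) y • DY) x := by
    have := hddU'.comp_hasFDerivAt x hY
    exact this
  have hρrdiv : ρ / r ≤ 1 := (div_le_one hrpos).2 hρr
  have gP2W : Good x (fun z => z 2 * U (Yf z)) (3 * A * ρ) (6 * A) := by
    refine ⟨x 2 • (deriv U y • DY) + U (Yf x) • EuclideanSpace.proj 2,
      (hasFDerivAt_coord x 2).mul hWfd, ?_, fun j => ?_⟩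
    · show |x 2 * U (Yf x)| ≤ 3 * A * ρ
      rw [hYx, abs_mul]
      calc |x 2| * |U y| ≤ r * (3 * A * ρ / r) :=
            mul_le_mul habs2 hWb (abs_nonneg _) hrpos.le
        _ = 3 * A * ρ := by field_simp
    · simp only [ContinuousLinearMap.add_apply, ContinuousLinearMap.smul_apply, smul_eq_mul,
        PiLp.proj_apply, EuclideanSpace.single_apply, hYx]
      refine (abs_add_le _ _).trans ?_
      have h1 : |x 2 * (deriv U y * DY (EuclideanSpace.single j 1))| ≤ 3 * A := by
        have : x 2 * (deriv U y * DY (EuclideanSpace.single j 1))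
            = deriv U y * (x 2 * DY (EuclideanSpace.single j 1)) := by ring
        rw [this, abs_mul]
        calc |deriv U y| * |x 2 * DY (EuclideanSpace.single j 1)|
            ≤ (3 * A * r / ρ) * (ρ / r) :=
              mul_le_mul hVb (hDYb2 j) (abs_nonneg _) (by positivity)
          _ = 3 * A := by field_simp
      have h2 : |U y * (if (2:Fin 3) = j then (1:ℝ) else 0)| ≤ 3 * A := by
        rw [abs_mul]
        calc |U y| * |(if (2:Fin 3) = j then (1:ℝ) else 0)| ≤ (3 * A * ρ / r) * 1 := by
              refine mul_le_mul hWb ?_ (abs_nonneg _) (by positivity)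
              split <;> simp
          _ = 3 * A * (ρ / r) := by ring
          _ ≤ 3 * A * 1 := by nlinarith
          _ = 3 * A := by ring
      linarith [h1, h2]
  have gP2V : Good x (fun z => z 2 * deriv U (Yf z)) (3 * A * r ^ 2 / ρ) (4 * A * r / ρ) := by
    refine ⟨x 2 • (deriv (deriv U) y • DY) + deriv U (Yf x) • EuclideanSpace.proj 2,
      (hasFDerivAt_coord x 2).mul hVfd, ?_, fun j => ?_⟩
    · show |x 2 * deriv U (Yf x)| ≤ 3 * A * r ^ 2 / ρ
      rw [hYx, abs_mul]
      calc |x 2| * |deriv U y| ≤ r * (3 * A * r / ρ) :=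
            mul_le_mul habs2 hVb (abs_nonneg _) hrpos.le
        _ = 3 * A * r ^ 2 / ρ := by field_simp
    · simp only [ContinuousLinearMap.add_apply, ContinuousLinearMap.smul_apply, smul_eq_mul,
        PiLp.proj_apply, EuclideanSpace.single_apply, hYx]
      refine (abs_add_le _ _).trans ?_
      have h1 : |x 2 * (deriv (deriv U) y * DY (EuclideanSpace.single j 1))| ≤ A * r / ρ := by
        have heq : x 2 * (deriv (deriv U) y * DY (EuclideanSpace.single j 1))
            = deriv (deriv U) y * (x 2 * DY (EuclideanSpace.single j 1)) := by ring
        rw [heq, abs_mul]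
        calc |deriv (deriv U) y| * |x 2 * DY (EuclideanSpace.single j 1)|
            ≤ (A * r ^ 2 / ρ ^ 2) * (ρ / r) :=
              mul_le_mul hU2b (hDYb2 j) (abs_nonneg _) (by positivity)
          _ = A * r / ρ := by field_simp
      have h2 : |deriv U y * (if (2:Fin 3) = j then (1:ℝ) else 0)| ≤ 3 * A * r / ρ := by
        rw [abs_mul]
        calc |deriv U y| * |(if (2:Fin 3) = j then (1:ℝ) else 0)| ≤ (3 * A * r / ρ) * 1 := by
              refine mul_le_mul hVb ?_ (abs_nonneg _) (by positivity)
              split <;> simp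
          _ = 3 * A * r / ρ := by ring
      have : A * r / ρ + 3 * A * r / ρ = 4 * A * r / ρ := by ring
      linarith
  -- simple goods
  have g0 : Good x (fun z : E3 => z 0) ρ 1 := by
    refine ⟨EuclideanSpace.proj 0, hasFDerivAt_coord x 0, habs0, fun j => ?_⟩
    rw [PiLp.proj_apply, EuclideanSpace.single_apply]
    split <;> simp
  have g1 : Good x (fun z : E3 => z 1) ρ 1 := by
    refine ⟨EuclideanSpace.proj 1, hasFDerivAt_coord x 1, habs1, fun j => ?_⟩
    rw [PiLp.proj_apply, EuclideanSpace.single_apply]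
    split <;> simp
  have g2 : Good x (fun z : E3 => z 2) r 1 := by
    refine ⟨EuclideanSpace.proj 2, hasFDerivAt_coord x 2, habs2, fun j => ?_⟩
    rw [PiLp.proj_apply, EuclideanSpace.single_apply]
    split <;> simp
  have gN : Good x Nf r 1 := by
    refine ⟨(1 / (2 * r)) • DS x, hN, by rw [hNx, abs_of_pos hrpos], fun j => ?_⟩
    rw [ContinuousLinearMap.smul_apply, smul_eq_mul, DS_apply, abs_mul]
    have hj : |x j| ≤ r := by
      fin_cases j
      · exact habs0.trans hρr
      · exact habs1.trans hρr
      · exact habs2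
    have h1 : |1 / (2 * r)| = 1 / (2 * r) := abs_of_pos (by positivity)
    have h2 : |2 * x j| ≤ 2 * r := by
      rw [abs_mul]
      norm_num
      exact hj
    calc |1 / (2 * r)| * |2 * x j| ≤ (1 / (2 * r)) * (2 * r) := by
          rw [h1]
          exact mul_le_mul le_rfl h2 (abs_nonneg _) (by positivity)
      _ = 1 := by field_simp
  -- inverses
  have gNinv : Good x (fun z => (Nf z)⁻¹) r⁻¹ (1 / r ^ 2) := by
    have h := gN.inv (m := r) hrpos (by rw [hNx, abs_of_pos hrpos]) zero_le_one
    exact h.mono le_rfl (by rw [one_div])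
  have gNN : Good x (fun z => Nf z * Nf z) (r * r) (r * 1 + r * 1) := gN.mul gN
  have gNNinv : Good x (fun z => (Nf z * Nf z)⁻¹) (r * r)⁻¹ ((r * 1 + r * 1) / (r * r) ^ 2) := by
    refine gNN.inv (by positivity) ?_ (by positivity)
    rw [hNx, abs_of_pos (by positivity)]
  have gQ : Good x (fun z : E3 => z 0 * z 0 + z 1 * z 1) (ρ * ρ + ρ * ρ)
      ((ρ * 1 + ρ * 1) + (ρ * 1 + ρ * 1)) := (g0.mul g0).add (g1.mul g1)
  have gNQ : Good x (fun z => Nf z * (z 0 * z 0 + z 1 * z 1)) (r * (ρ * ρ + ρ * ρ))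
      (r * ((ρ * 1 + ρ * 1) + (ρ * 1 + ρ * 1)) + (ρ * ρ + ρ * ρ) * 1) := gN.mul gQ
  have hNQx : Nf x * (x 0 * x 0 + x 1 * x 1) = r * ρ ^ 2 := by
    rw [hNx, hρsq]
    ring
  have gNQinv : Good x (fun z => (Nf z * (z 0 * z 0 + z 1 * z 1))⁻¹) (r * ρ ^ 2)⁻¹
      ((r * ((ρ * 1 + ρ * 1) + (ρ * 1 + ρ * 1)) + (ρ * ρ + ρ * ρ) * 1) / (r * ρ ^ 2) ^ 2) := by
    refine gNQ.inv (by positivity) ?_ (by positivity)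
    rw [hNQx, abs_of_pos (by positivity)]
  -- component goods
  have gu0 : Good x
      (fun z => z 0 * deriv U (Yf z) * (Nf z * Nf z)⁻¹
        + z 0 * (z 2 * U (Yf z)) * (Nf z * (z 0 * z 0 + z 1 * z 1))⁻¹)
      ((ρ * (3 * A * r / ρ)) * (r * r)⁻¹ + (ρ * (3 * A * ρ)) * (r * ρ ^ 2)⁻¹)
      (((ρ * (3 * A * r / ρ)) * ((r * 1 + r * 1) / (r * r) ^ 2)
          + (r * r)⁻¹ * (ρ * (2 * A * r / ρ ^ 2) + (3 * A * r / ρ) * 1))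
        + ((ρ * (3 * A * ρ)) * ((r * ((ρ * 1 + ρ * 1) + (ρ * 1 + ρ * 1)) + (ρ * ρ + ρ * ρ) * 1)
              / (r * ρ ^ 2) ^ 2)
          + (r * ρ ^ 2)⁻¹ * (ρ * (6 * A) + (3 * A * ρ) * 1))) :=
    ((g0.mul gV).mul gNNinv).add ((g0.mul gP2W).mul gNQinv)
  have gu1 : Good x
      (fun z => z 1 * deriv U (Yf z) * (Nf z * Nf z)⁻¹
        + z 1 * (z 2 * U (Yf z)) * (Nf z * (z 0 * z 0 + z 1 * z 1))⁻¹)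
      ((ρ * (3 * A * r / ρ)) * (r * r)⁻¹ + (ρ * (3 * A * ρ)) * (r * ρ ^ 2)⁻¹)
      (((ρ * (3 * A * r / ρ)) * ((r * 1 + r * 1) / (r * r) ^ 2)
          + (r * r)⁻¹ * (ρ * (2 * A * r / ρ ^ 2) + (3 * A * r / ρ) * 1))
        + ((ρ * (3 * A * ρ)) * ((r * ((ρ * 1 + ρ * 1) + (ρ * 1 + ρ * 1)) + (ρ * ρ + ρ * ρ) * 1)
              / (r * ρ ^ 2) ^ 2)
          + (r * ρ ^ 2)⁻¹ * (ρ * (6 * A) + (3 * A * ρ) * 1))) :=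
    ((g1.mul gV).mul gNNinv).add ((g1.mul gP2W).mul gNQinv)
  have gu2 : Good x
      (fun z => z 2 * deriv U (Yf z) * (Nf z * Nf z)⁻¹ - U (Yf z) * (Nf z)⁻¹)
      ((3 * A * r ^ 2 / ρ) * (r * r)⁻¹ + (3 * A * ρ / r) * r⁻¹)
      (((3 * A * r ^ 2 / ρ) * ((r * 1 + r * 1) / (r * r) ^ 2)
          + (r * r)⁻¹ * (4 * A * r / ρ))
        + ((3 * A * ρ / r) * (1 / r ^ 2) + r⁻¹ * (6 * A / ρ))) :=
    (gP2V.mul gNNinv).sub (gW.mul gNinv)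
  have hb01 := hb01_lemma (r := r) (ρ := ρ) (A := A) hrpos hρpos hρr hA
  have hb2 := hb2_lemma (r := r) (ρ := ρ) (A := A) hrpos hρpos hρr hA
  obtain ⟨D0, hD0, hv0, hD0b⟩ := gu0
  obtain ⟨D1, hD1, hv1, hD1b⟩ := gu1
  obtain ⟨D2, hD2, hv2, hD2b⟩ := gu2
  have hD0b' : ∀ j, |D0 (EuclideanSpace.single j 1)| ≤ 50 * A / (r * ρ) :=
    fun j => (hD0b j).trans hb01
  have hD1b' : ∀ j, |D1 (EuclideanSpace.single j 1)| ≤ 50 * A / (r * ρ) :=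
    fun j => (hD1b j).trans hb01
  have hD2b' : ∀ j, |D2 (EuclideanSpace.single j 1)| ≤ 50 * A / (r * ρ) :=
    fun j => (hD2b j).trans hb2
  have hpi : HasFDerivAt (fun z : E3 => fun i : Fin 3 => ![u0f U, u1f U, u2f U] i z)
      (ContinuousLinearMap.pi ![D0, D1, D2]) x := by
    apply hasFDerivAt_pi.2
    intro i
    fin_cases i
    · exact hD0
    · exact hD1
    · exact hD2
  have hvel : velField U = fun z : E3 =>
      (PiLp.continuousLinearEquiv 2 ℝ (fun _ : Fin 3 => ℝ)).symm
        (fun i : Fin 3 => ![u0f U, u1f U, u2f U] i z) := by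
    funext z
    have : ∀ i : Fin 3, velField U z i = ![u0f U, u1f U, u2f U] i z := by
      intro i
      fin_cases i
      · exact velField_apply0 U z
      · exact velField_apply1 U z
      · exact velField_apply2 U z
    ext i
    exact this i
  have hmain : HasFDerivAt (velField U)
      (((PiLp.continuousLinearEquiv 2 ℝ (fun _ : Fin 3 => ℝ)).symm :
          (Fin 3 → ℝ) →L[ℝ] E3).comp (ContinuousLinearMap.pi ![D0, D1, D2])) x := by
    rw [hvel]
    exact ((PiLp.continuousLinearEquiv 2 ℝ (fun _ : Fin 3 => ℝ)).symm.hasFDerivAt).comp x hpi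
  have hdiff : DifferentiableAt ℝ (velField U) x := hmain.differentiableAt
  have hfd := hmain.fderiv
  have hentry : ∀ i j : Fin 3,
      |fderiv ℝ (velField U) x (EuclideanSpace.single j 1) i| ≤ 50 * A / (r * ρ) := by
    intro i j
    rw [hfd]
    simp only [ContinuousLinearMap.comp_apply, ContinuousLinearEquiv.coe_coe,
      PiLp.continuousLinearEquiv_symm_apply, PiLp.toLp_apply,
      ContinuousLinearMap.pi_apply]
    fin_cases i
    · simpa using hD0b' j
    · simpa using hD1b' j
    · simpa using hD2b' j
  have hfinal : hsNorm (velField U) x ≤ 150 * A / (r * ρ) := by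
    rw [hsNorm]
    set M := 50 * A / (r * ρ) with hMdef
    have hM : 0 ≤ M := by positivity
    have hsum : ∑ i : Fin 3, ∑ j : Fin 3,
        (fderiv ℝ (velField U) x (EuclideanSpace.single j 1) i) ^ 2 ≤ 9 * M ^ 2 := by
      have hterm : ∀ i j : Fin 3,
          (fderiv ℝ (velField U) x (EuclideanSpace.single j 1) i) ^ 2 ≤ M ^ 2 := by
        intro i j
        rw [← sq_abs]
        exact pow_le_pow_left₀ (abs_nonneg _) (hentry i j) 2
      calc ∑ i : Fin 3, ∑ j : Fin 3,
            (fderiv ℝ (velField U) x (EuclideanSpace.single j 1) i) ^ 2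
          ≤ ∑ _i : Fin 3, ∑ _j : Fin 3, M ^ 2 :=
            Finset.sum_le_sum fun i _ => Finset.sum_le_sum fun j _ => hterm i j
        _ = 9 * M ^ 2 := by
            simp [Fin.sum_univ_three]
            ring
    calc Real.sqrt (∑ i : Fin 3, ∑ j : Fin 3,
          (fderiv ℝ (velField U) x (EuclideanSpace.single j 1) i) ^ 2)
        ≤ Real.sqrt (9 * M ^ 2) := Real.sqrt_le_sqrt hsum
      _ = 3 * M := by
          rw [show (9:ℝ) * M ^ 2 = (3 * M) ^ 2 by ring, Real.sqrt_sq (by positivity)]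
      _ = 150 * A / (r * ρ) := by
          rw [hMdef]
          ring
  exact ⟨hdiff, hfinal⟩


/-- Gradient bound for the associated velocity field (Corollary 2.2, estimate (2.17)). -/
theorem stmt10 :
    ∃ C > 0, ∀ A : ℝ, 0 < A → ∀ U : ℝ → ℝ,
      ContinuousOn U (Icc (-1) 1) → ContDiffOn ℝ 2 U (Ioo (-1) 1) →
      (∀ y ∈ Ioo (-1 : ℝ) 1, |U y| ≤ A * (1 - y ^ 2) * (1 + |Real.log (1 - y ^ 2)|)) →
      (∀ y ∈ Ioo (-1 : ℝ) 1, |deriv U y| ≤ A * (1 + |Real.log (1 - y ^ 2)|)) →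
      (∀ y ∈ Ioo (-1 : ℝ) 1, |deriv (deriv U) y| ≤ A / (1 - y ^ 2)) →
      ∀ x : EuclideanSpace ℝ (Fin 3), ¬(x 0 = 0 ∧ x 1 = 0) →
        DifferentiableAt ℝ (velField U) x ∧
        hsNorm (velField U) x ≤ C * A / (‖x‖ * primeNorm3 x) := by
  refine ⟨150, by norm_num, ?_⟩
  intro A hA U hUcont hUd hU0 hU1 hU2 x hx
  have hQpos : 0 < x 0 ^ 2 + x 1 ^ 2 := by
    rcases not_and_or.1 hx with h | h
    · positivity
    · positivity
  set r := ‖x‖ with hrdef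
  set ρ := Real.sqrt (x 0 ^ 2 + x 1 ^ 2) with hρdef
  have hρx : primeNorm3 x = ρ := rfl
  have hρpos : 0 < ρ := Real.sqrt_pos.2 hQpos
  have hρsq : ρ ^ 2 = x 0 ^ 2 + x 1 ^ 2 := Real.sq_sqrt hQpos.le
  have hrx : r = Real.sqrt (x 0 ^ 2 + x 1 ^ 2 + x 2 ^ 2) := norm_eq_Nf x
  have hrpos : 0 < r := by
    rw [hrx]
    positivity
  have hr2 : r ^ 2 = ρ ^ 2 + x 2 ^ 2 := by
    rw [hrx, Real.sq_sqrt (by positivity), hρsq]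
  have hρr : ρ ≤ r := by
    nlinarith [sq_nonneg (x 2)]
  have habs0 : |x 0| ≤ ρ := by
    rw [← Real.sqrt_sq_eq_abs, hρdef]
    exact Real.sqrt_le_sqrt (by nlinarith [sq_nonneg (x 1)])
  have habs1 : |x 1| ≤ ρ := by
    rw [← Real.sqrt_sq_eq_abs, hρdef]
    exact Real.sqrt_le_sqrt (by nlinarith [sq_nonneg (x 0)])
  have habs2 : |x 2| ≤ r := by
    rw [← Real.sqrt_sq_eq_abs, ← Real.sqrt_sq hrpos.le]
    exact Real.sqrt_le_sqrt (by nlinarith)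
  set y := x 2 / r with hydef
  have hymem : y ∈ Ioo (-1 : ℝ) 1 := by
    have h : |y| < 1 := by
      rw [hydef, abs_div, abs_of_pos hrpos, div_lt_one hrpos]
      rcases lt_or_eq_of_le habs2 with h | h
      · exact h
      · exfalso
        nlinarith [abs_nonneg (x 2), sq_abs (x 2)]
    exact ⟨neg_lt_of_abs_lt h, lt_of_abs_lt h⟩
  have hy1 : |y| ≤ 1 := by
    rw [abs_le]
    exact ⟨hymem.1.le, hymem.2.le⟩
  have h1y : 1 - y ^ 2 = ρ ^ 2 / r ^ 2 := by
    rw [hydef, div_pow]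
    field_simp
    nlinarith
  have hLog : 1 + |Real.log (1 - y ^ 2)| ≤ 3 * (r / ρ) := by
    have ht : (0:ℝ) < 1 - y ^ 2 := by rw [h1y]; positivity
    have ht1 : 1 - y ^ 2 ≤ 1 := by nlinarith [sq_nonneg y]
    have hlogle : Real.log (1 - y ^ 2) ≤ 0 := Real.log_nonpos ht.le ht1
    rw [abs_of_nonpos hlogle]
    have heq : -Real.log (1 - y ^ 2) = 2 * Real.log (r / ρ) := by
      rw [h1y, ← Real.log_inv]
      rw [show (ρ ^ 2 / r ^ 2)⁻¹ = (r / ρ) ^ 2 by rw [div_pow, inv_div]]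
      rw [Real.log_pow]
      push_cast
      ring
    rw [heq]
    have hrρ : (1:ℝ) ≤ r / ρ := (one_le_div hρpos).2 hρr
    have := Real.log_le_sub_one_of_pos (show (0:ℝ) < r / ρ by positivity)
    nlinarith
  -- derivative existence
  have hdiffU : DifferentiableOn ℝ U (Ioo (-1) 1) := hUd.differentiableOn (by norm_num)
  have hdU : HasDerivAt U (deriv U y) y :=
    ((hdiffU y hymem).differentiableAt (isOpen_Ioo.mem_nhds hymem)).hasDerivAt
  have hdU2 : ContDiffOn ℝ 1 (deriv U) (Ioo (-1) 1) := by
    have h := (contDiffOn_succ_iff_deriv_of_isOpen (isOpen_Ioo)).1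
      (show ContDiffOn ℝ (1 + 1) U (Ioo (-1) 1) by exact_mod_cast hUd)
    exact h.2.2
  have hddU : HasDerivAt (deriv U) (deriv (deriv U) y) y :=
    (((hdU2.differentiableOn one_ne_zero) y hymem).differentiableAt
      (isOpen_Ioo.mem_nhds hymem)).hasDerivAt
  -- value bounds
  have hWb : |U y| ≤ 3 * A * ρ / r := by
    have h := hU0 y hymem
    rw [h1y] at h
    calc |U y| ≤ A * (ρ ^ 2 / r ^ 2) * (1 + |Real.log (ρ ^ 2 / r ^ 2)|) := h
      _ ≤ A * (ρ ^ 2 / r ^ 2) * (3 * (r / ρ)) := by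
          refine mul_le_mul_of_nonneg_left ?_ (by positivity)
          rw [← h1y]
          exact hLog
      _ = 3 * A * ρ / r := by
          field_simp
  have hVb : |deriv U y| ≤ 3 * A * r / ρ := by
    have h := hU1 y hymem
    calc |deriv U y| ≤ A * (1 + |Real.log (1 - y ^ 2)|) := h
      _ ≤ A * (3 * (r / ρ)) := mul_le_mul_of_nonneg_left hLog hA.le
      _ = 3 * A * r / ρ := by
          field_simp
  have hU2b : |deriv (deriv U) y| ≤ A * r ^ 2 / ρ ^ 2 := by
    have h := hU2 y hymem
    rw [h1y] at h
    calc |deriv (deriv U) y| ≤ A / (ρ ^ 2 / r ^ 2) := h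
      _ = A * r ^ 2 / ρ ^ 2 := by
          field_simp
  have hmain := main_estimate x hQpos r ρ A y U hA hydef hy1 hdU hddU hWb hVb hU2b
    hrx hρdef hρpos hrpos hρr hρsq hr2 habs0 habs1 habs2
  rw [hρx]
  exact hmain
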